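/- Let C ⊆ ℝ² be a compact convex body invariant under rotation by 120° about a point p ∈ C, and let {C₁, C₂, C₃} be any partition of C into three sets. For any x on the boundary of C, the maximum of the diameters of the Cᵢ is at least dist(p, x). -/

import Mathlib

open Complex

lemma aux_abs_one_sub_exp (θ : ℝ) (h : Real.cos θ = -(1/2)) :
    1 ≤ ‖1 - Complex.exp (θ * Complex.I)‖ := by
  have hre : (Complex.exp (θ * Complex.I)).re = Real.cos θ := Complex.exp_ofReal_mul_I_re θ
  have him : (Complex.exp (θ * Complex.I)).im = Real.sin θ := Complex.exp_ofReal_mul_I_im θ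
  have hsq : (‖1 - Complex.exp (θ * Complex.I)‖)^2 = 3 := by
    rw [Complex.sq_norm, Complex.normSq_apply]
    simp only [Complex.sub_re, Complex.sub_im, Complex.one_re, Complex.one_im, hre, him]
    have := Real.sin_sq_add_cos_sq θ
    nlinarith
  nlinarith [norm_nonneg (1 - Complex.exp (θ * Complex.I))]

/-- For a 3-rotationally symmetric planar convex body `C` with center `p`,
any partition of `C` into three sets, and any boundary point `x`, the maximum of the
diameters of the parts is at least `dist p x`. -/
theorem stmt3 (C : Set ℂ) (p : ℂ)
    (hC : IsCompact C) (hconv : Convex ℝ C) (hint : (interior C).Nonempty)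
    (hp : p ∈ C)
    (hsym : (fun y => p + Complex.exp (2 * Real.pi * Complex.I / 3) * (y - p)) '' C = C)
    (C₁ C₂ C₃ : Set ℂ) (hcover : C = C₁ ∪ C₂ ∪ C₃)
    (h1 : C₁ ⊆ C) (h2 : C₂ ⊆ C) (h3 : C₃ ⊆ C)
    (x : ℂ) (hx : x ∈ frontier C) :
    max (max (Metric.diam C₁) (Metric.diam C₂)) (Metric.diam C₃) ≥ dist p x := by
  set ω : ℂ := Complex.exp (2 * Real.pi * Complex.I / 3) with hω
  have hθ : (2 * (Real.pi:ℂ) * Complex.I / 3) = ((2*Real.pi/3 : ℝ) : ℂ) * Complex.I := by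
    push_cast; ring
  have hω1 : ‖ω‖ = 1 := by
    rw [hω, hθ]; exact Complex.norm_exp_ofReal_mul_I _
  have hcos1 : Real.cos (2*Real.pi/3) = -(1/2) := by
    rw [show (2*Real.pi/3) = Real.pi - Real.pi/3 by ring, Real.cos_pi_sub,
      Real.cos_pi_div_three]
  have hcos2 : Real.cos (4*Real.pi/3) = -(1/2) := by
    rw [show (4*Real.pi/3) = Real.pi - (-(Real.pi/3)) by ring, Real.cos_pi_sub,
      Real.cos_neg, Real.cos_pi_div_three]
  have hA1 : 1 ≤ ‖1 - ω‖ := by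
    rw [hω, hθ]; exact aux_abs_one_sub_exp _ hcos1
  have hω2 : ω * ω = Complex.exp (((4*Real.pi/3 : ℝ) : ℂ) * Complex.I) := by
    rw [hω, ← Complex.exp_add]; congr 1; push_cast; ring
  have hA2 : 1 ≤ ‖1 - ω * ω‖ := by
    rw [hω2]; exact aux_abs_one_sub_exp _ hcos2
  -- memberships
  have hxC : x ∈ C := by
    have := frontier_subset_closure (s := C) hx
    rwa [hC.isClosed.closure_eq] at this
  have hrot : ∀ y ∈ C, p + ω * (y - p) ∈ C := by
    intro y hy
    have : p + ω * (y - p) ∈ (fun y => p + ω * (y - p)) '' C := ⟨y, hy, rfl⟩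
    rwa [hsym] at this
  set a2 : ℂ := p + ω * (x - p) with ha2
  set a3 : ℂ := p + ω * ω * (x - p) with ha3
  have ha2C : a2 ∈ C := hrot x hxC
  have ha3C : a3 ∈ C := by
    have := hrot a2 ha2C
    have e : p + ω * (a2 - p) = a3 := by rw [ha2, ha3]; ring
    rwa [e] at this
  set d : ℝ := dist p x with hd
  have hd0 : 0 ≤ d := dist_nonneg
  -- pairwise distance bounds
  have hdpx : dist p x = d := rfl
  have hdpa2 : dist p a2 = d := by
    rw [hd, Complex.dist_eq, Complex.dist_eq, ha2]
    rw [show p - (p + ω * (x - p)) = ω * (p - x) by ring, norm_mul, hω1, one_mul]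
  have hdpa3 : dist p a3 = d := by
    rw [hd, Complex.dist_eq, Complex.dist_eq, ha3]
    rw [show p - (p + ω * ω * (x - p)) = ω * (ω * (p - x)) by ring, norm_mul, norm_mul,
      hω1, one_mul, one_mul]
  have habspx : ‖p - x‖ = d := by rw [hd, Complex.dist_eq]
  have hdxa2 : d ≤ dist x a2 := by
    rw [Complex.dist_eq, ha2, show x - (p + ω * (x - p)) = (1 - ω) * (x - p) by ring,
      norm_mul]
    calc d = 1 * ‖x - p‖ := by
            rw [one_mul, norm_sub_rev, habspx]
      _ ≤ _ := by
            apply mul_le_mul_of_nonneg_right hA1 (norm_nonneg _)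
  have hdxa3 : d ≤ dist x a3 := by
    rw [Complex.dist_eq, ha3, show x - (p + ω * ω * (x - p)) = (1 - ω * ω) * (x - p) by ring,
      norm_mul]
    calc d = 1 * ‖x - p‖ := by
            rw [one_mul, norm_sub_rev, habspx]
      _ ≤ _ := by
            apply mul_le_mul_of_nonneg_right hA2 (norm_nonneg _)
  have hda23 : d ≤ dist a2 a3 := by
    rw [Complex.dist_eq, ha2, ha3,
      show (p + ω * (x - p)) - (p + ω * ω * (x - p)) = ω * ((1 - ω) * (x - p)) by ring,
      norm_mul, hω1, one_mul, norm_mul]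
    calc d = 1 * ‖x - p‖ := by
            rw [one_mul, norm_sub_rev, habspx]
      _ ≤ _ := by
            apply mul_le_mul_of_nonneg_right hA1 (norm_nonneg _)
  -- pigeonhole setup
  set S : Fin 3 → Set ℂ := ![C₁, C₂, C₃] with hS
  set f : Fin 4 → ℂ := ![p, x, a2, a3] with hf
  have hmemC : ∀ i, f i ∈ C := by
    intro i; fin_cases i <;> simpa [hf] using by assumption
  have hmem : ∀ i, ∃ k, f i ∈ S k := by
    intro i
    have : f i ∈ C₁ ∪ C₂ ∪ C₃ := by rw [← hcover]; exact hmemC i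
    rcases this with (h | h) | h
    · exact ⟨0, by simpa [hS] using h⟩
    · exact ⟨1, by simpa [hS] using h⟩
    · exact ⟨2, by simpa [hS] using h⟩
  choose g hg using hmem
  obtain ⟨i, j, hij, hgij⟩ := Fintype.exists_ne_map_eq_of_card_lt g (by simp)
  have l1 : d ≤ dist p x := le_of_eq hdpx.symm
  have l2 : d ≤ dist p a2 := le_of_eq hdpa2.symm
  have l3 : d ≤ dist p a3 := le_of_eq hdpa3.symm
  have hpair : d ≤ dist (f i) (f j) := by
    clear hsym hrot hω2 hθ hcos1 hcos2 hA1 hA2 hω1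
    fin_cases i <;> fin_cases j <;>
      simp only [hf, Matrix.cons_val_zero, Matrix.cons_val_one, Matrix.head_cons,
        Matrix.cons_val_two, Matrix.tail_cons, Matrix.cons_val_three] <;>
      first
        | exact absurd rfl hij
        | exact le_of_eq dist_self.symm
        | exact l1 | exact l2 | exact l3 | exact hdxa2 | exact hdxa3 | exact hda23
        | (rw [dist_comm]; first
            | exact l1 | exact l2 | exact l3 | exact hdxa2 | exact hdxa3 | exact hda23)
  have hbdd : ∀ k, Bornology.IsBounded (S k) := by
    intro k; fin_cases k
    · exact hC.isBounded.subset h1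
    · exact hC.isBounded.subset h2
    · exact hC.isBounded.subset h3
  have hdiam : d ≤ Metric.diam (S (g i)) := by
    refine le_trans hpair (Metric.dist_le_diam_of_mem (hbdd _) (hg i) ?_)
    rw [hgij]; exact hg j
  have hle : ∀ k, Metric.diam (S k) ≤
      max (max (Metric.diam C₁) (Metric.diam C₂)) (Metric.diam C₃) := by
    intro k; fin_cases k
    · exact le_max_of_le_left (le_max_left _ _)
    · exact le_max_of_le_left (le_max_right _ _)
    · exact le_max_right _ _
  exact le_trans hdiam (hle (g i))
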